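/- Let (Ω, F, μ) be a probability space, γ > 0, V a nonempty set of admissible controls, and for each v ∈ V let X_v : Ω → ℝ be square-integrable (MemLp (X_v) 2 μ). Assume the map v ↦ E[X_v] − (γ/2)Var(X_v) is bounded above. Then sup_{v∈V} ( E[X_v] − (γ/2)Var(X_v) ) = sup_{ψ∈ℝ} ( sup_{v∈V} E[(1 − γψ)X_v − (γ/2)X_v²] − (γ/2)ψ² ). -/

import Mathlib

open MeasureTheory

/-- Dual formulation of the optimal mean–variance value: if for each admissible control
`v` in a nonempty set `V` the terminal wealth `X v` is square-integrable and the
mean–variance objective `v ↦ E[X v] - (γ/2)Var(X v)` is bounded above, then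
`sup_v (E[X v] - (γ/2)Var(X v))
  = sup_{ψ ∈ ℝ} ( sup_v E[(1 - γψ)X v - (γ/2)(X v)²] - (γ/2)ψ² )`,
where `Var(X) = E[X²] - (E[X])²`. -/
theorem sup_mean_variance_eq_sup_dual
    {Ω : Type*} [MeasurableSpace Ω] (μ : Measure Ω) [IsProbabilityMeasure μ]
    (γ : ℝ) (hγ : 0 < γ)
    {V : Type*} [Nonempty V] (X : V → Ω → ℝ)
    (hX : ∀ v : V, MemLp (X v) 2 μ)
    (hbdd : BddAbove (Set.range fun v : V =>
      (∫ ω, X v ω ∂μ) - γ / 2 * ((∫ ω, (X v ω) ^ 2 ∂μ) - (∫ ω, X v ω ∂μ) ^ 2))) :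
    (⨆ v : V,
        ((∫ ω, X v ω ∂μ) - γ / 2 * ((∫ ω, (X v ω) ^ 2 ∂μ) - (∫ ω, X v ω ∂μ) ^ 2))) =
      ⨆ ψ : ℝ,
        ((⨆ v : V, ∫ ω, ((1 - γ * ψ) * X v ω - γ / 2 * (X v ω) ^ 2) ∂μ) -
          γ / 2 * ψ ^ 2) := by
  set m : V → ℝ := fun v => ∫ ω, X v ω ∂μ with hm
  set s : V → ℝ := fun v => ∫ ω, (X v ω) ^ 2 ∂μ with hs
  set MV : V → ℝ := fun v => m v - γ / 2 * (s v - m v ^ 2) with hMV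
  have hint : ∀ v, Integrable (X v) μ := fun v => (hX v).integrable (by norm_num)
  have hsqint : ∀ v, Integrable (fun ω => (X v ω) ^ 2) μ := by
    intro v
    have := ((hX v).integrable_norm_rpow (by norm_num) (by norm_num))
    simpa [ENNReal.toReal_ofNat, Real.rpow_natCast, abs_pow] using
      (hX v).integrable_sq
  have hIeq : ∀ (v : V) (ψ : ℝ),
      (∫ ω, ((1 - γ * ψ) * X v ω - γ / 2 * (X v ω) ^ 2) ∂μ)
        = (1 - γ * ψ) * m v - γ / 2 * s v := by
    intro v ψ
    rw [integral_sub ((hint v).const_mul _) ((hsqint v).const_mul _),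
      integral_const_mul, integral_const_mul]
  clear_value m s MV
  -- key pointwise identity
  have hkey : ∀ (v : V) (ψ : ℝ),
      (1 - γ * ψ) * m v - γ / 2 * s v - γ / 2 * ψ ^ 2
        = MV v - γ / 2 * (ψ + m v) ^ 2 := by
    intro v ψ; simp only [hMV]; ring
  obtain ⟨M, hM⟩ := hbdd
  have hMub : ∀ v, MV v ≤ M := fun v => hM ⟨v, rfl⟩
  have hbddψ : ∀ ψ : ℝ, BddAbove (Set.range fun v : V =>
      ∫ ω, ((1 - γ * ψ) * X v ω - γ / 2 * (X v ω) ^ 2) ∂μ) := by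
    intro ψ
    refine ⟨M + γ / 2 * ψ ^ 2, ?_⟩
    rintro _ ⟨v, rfl⟩
    show (∫ ω, ((1 - γ * ψ) * X v ω - γ / 2 * (X v ω) ^ 2) ∂μ) ≤ M + γ / 2 * ψ ^ 2
    rw [hIeq v ψ]
    have hk := hkey v ψ
    have h0 : 0 ≤ γ / 2 * (ψ + m v) ^ 2 := by positivity
    have h1 := hMub v
    nlinarith [hk, h0, h1]
  have hgle : ∀ (v : V) (ψ : ℝ),
      (∫ ω, ((1 - γ * ψ) * X v ω - γ / 2 * (X v ω) ^ 2) ∂μ) - γ / 2 * ψ ^ 2 ≤ MV v := by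
    intro v ψ
    rw [hIeq v ψ, hkey v ψ]
    have : 0 ≤ γ / 2 * (ψ + m v) ^ 2 := by positivity
    linarith
  have hLHS : (⨆ v : V, MV v) = ⨆ v : V, MV v := rfl
  -- RHS ≤ LHS bounds
  have hψle : ∀ ψ : ℝ,
      ((⨆ v : V, ∫ ω, ((1 - γ * ψ) * X v ω - γ / 2 * (X v ω) ^ 2) ∂μ) - γ / 2 * ψ ^ 2)
        ≤ ⨆ v : V, MV v := by
    intro ψ
    rw [sub_le_iff_le_add]
    refine ciSup_le fun v => ?_
    have h1 : (∫ ω, ((1 - γ * ψ) * X v ω - γ / 2 * (X v ω) ^ 2) ∂μ)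
        ≤ MV v + γ / 2 * ψ ^ 2 := by linarith [hgle v ψ]
    exact h1.trans (add_le_add_left (le_ciSup ⟨M, hM⟩ v) _)
  apply le_antisymm
  · refine ciSup_le fun v => ?_
    have h1 : MV v =
        ((∫ ω, ((1 - γ * (-(m v))) * X v ω - γ / 2 * (X v ω) ^ 2) ∂μ)
          - γ / 2 * (-(m v)) ^ 2) := by
      rw [hIeq, hkey]
      ring_nf
    rw [h1]
    have h2 : ((∫ ω, ((1 - γ * (-(m v))) * X v ω - γ / 2 * (X v ω) ^ 2) ∂μ)
          - γ / 2 * (-(m v)) ^ 2)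
        ≤ ((⨆ v' : V, ∫ ω, ((1 - γ * (-(m v))) * X v' ω - γ / 2 * (X v' ω) ^ 2) ∂μ)
          - γ / 2 * (-(m v)) ^ 2) :=
      sub_le_sub_right (le_ciSup (hbddψ (-(m v))) v) _
    refine h2.trans ?_
    exact le_ciSup (f := fun ψ : ℝ =>
      (⨆ v' : V, ∫ ω, ((1 - γ * ψ) * X v' ω - γ / 2 * (X v' ω) ^ 2) ∂μ) - γ / 2 * ψ ^ 2)
      ⟨⨆ v : V, MV v, by rintro _ ⟨ψ, rfl⟩; exact hψle ψ⟩ (-(m v))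
  · exact ciSup_le hψle
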